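/- Let M be a multiplication R-module with ann(M) prime, not simple, and suppose J(M) = 0. Then the Golomb space G(M) (the subspace M \ {0} of G̃(M)) is Hausdorff: for distinct nonzero m, n ∈ M there exists a maximal submodule P of M with m ∉ P, n ∉ P, and m − n ∉ P, so that m + P and n + P are disjoint basic open neighborhoods. -/

import Mathlib

open Pointwise

section aux
variable {R M : Type*} [CommRing R] [AddCommGroup M] [Module R M]

theorem aux_colon_smul_le (N : Submodule R M) :
    (N.colon ⊤) • (⊤ : Submodule R M) ≤ N := by
  rw [Submodule.smul_le]
  intro r hr m hm
  exact Submodule.mem_colon.1 hr m hm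

theorem aux_span_eq (hmul : ∀ N : Submodule R M, ∃ I : Ideal R, N = I • (⊤ : Submodule R M))
    (x : M) :
    Submodule.span R {x} = ((Submodule.span R {x}).colon ⊤) • (⊤ : Submodule R M) := by
  obtain ⟨I, hI⟩ := hmul (Submodule.span R {x})
  refine le_antisymm ?_ (aux_colon_smul_le _)
  have hIle : I ≤ (Submodule.span R {x}).colon ⊤ := by
    intro r hr
    rw [Submodule.mem_colon]
    intro m hm
    rw [hI]
    exact Submodule.smul_mem_smul hr trivial
  calc Submodule.span R {x} = I • ⊤ := hI
    _ ≤ _ := Submodule.smul_mono_left hIle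

theorem aux_not_le (hmul : ∀ N : Submodule R M, ∃ I : Ideal R, N = I • (⊤ : Submodule R M))
    {x : M} (hx : x ≠ 0) :
    ¬ (Submodule.span R {x}).colon ⊤ ≤ (⊥ : Submodule R M).colon ⊤ := by
  intro h
  apply hx
  have : Submodule.span R {x} ≤ ⊥ := by
    calc Submodule.span R {x} = ((Submodule.span R {x}).colon ⊤) • ⊤ := aux_span_eq hmul x
      _ ≤ ((⊥ : Submodule R M).colon ⊤) • ⊤ := Submodule.smul_mono_left h
      _ ≤ ⊥ := aux_colon_smul_le _
  simpa using this (Submodule.mem_span_singleton_self x)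

theorem aux_key (hmul : ∀ N : Submodule R M, ∃ I : Ideal R, N = I • (⊤ : Submodule R M))
    (hp : ((⊥ : Submodule R M).colon ⊤).IsPrime)
    (hJ : sInf {P : Submodule R M | IsCoatom P} = ⊥)
    {m n : M} (hm : m ≠ 0) (hn : n ≠ 0) (hmn : m - n ≠ 0) :
    ∃ P : Submodule R M, IsCoatom P ∧ m ∉ P ∧ n ∉ P ∧ m - n ∉ P := by
  set p : Ideal R := (⊥ : Submodule R M).colon ⊤ with hpdef
  set Im : Ideal R := (Submodule.span R {m}).colon ⊤
  set In : Ideal R := (Submodule.span R {n}).colon ⊤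
  set Id : Ideal R := (Submodule.span R {m - n}).colon ⊤
  set I : Ideal R := Im * In * Id with hIdef
  have hInotp : ¬ I ≤ p := by
    intro h
    rcases (hp.mul_le.1 h) with h' | h'
    · rcases (hp.mul_le.1 h') with h'' | h''
      · exact aux_not_le hmul hm h''
      · exact aux_not_le hmul hn h''
    · exact aux_not_le hmul hmn h'
  have hIT : I • (⊤ : Submodule R M) ≠ ⊥ := by
    intro h
    apply hInotp
    intro r hr
    rw [Submodule.mem_colon]
    intro x hx
    have : r • x ∈ I • (⊤ : Submodule R M) := Submodule.smul_mem_smul hr trivial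
    rw [h] at this
    exact this
  have : ∃ P ∈ {P : Submodule R M | IsCoatom P}, ¬ I • (⊤ : Submodule R M) ≤ P := by
    by_contra h
    push_neg at h
    exact hIT (le_bot_iff.1 (hJ ▸ le_sInf h))
  obtain ⟨P, hP, hPI⟩ := this
  have hq : ¬ I ≤ P.colon ⊤ := by
    intro h
    exact hPI (le_trans (Submodule.smul_mono_left h) (aux_colon_smul_le P))
  have key : ∀ x : M, (Submodule.span R {x}).colon ⊤ = Im ∨
      (Submodule.span R {x}).colon ⊤ = In ∨ (Submodule.span R {x}).colon ⊤ = Id → True := fun _ _ => trivial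
  have notmem : ∀ x : M, I ≤ (Submodule.span R {x}).colon ⊤ → x ∉ P := by
    intro x hle hx
    apply hq
    refine le_trans hle ?_
    intro r hr
    rw [Submodule.mem_colon] at hr ⊢
    intro y hy
    have hsp : Submodule.span R {x} ≤ P := Submodule.span_le.2 (by simpa using hx)
    exact hsp (hr y hy)
  have hImle : I ≤ Im := le_trans Ideal.mul_le_left Ideal.mul_le_left
  have hInle : I ≤ In := le_trans Ideal.mul_le_left Ideal.mul_le_right
  have hIdle : I ≤ Id := Ideal.mul_le_right
  exact ⟨P, hP, notmem m hImle, notmem n hInle, notmem (m - n) hIdle⟩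

end aux
theorem golomb_hausdorff_of_jacobson_bot
    {R M : Type*} [CommRing R] [AddCommGroup M] [Module R M] [Nontrivial M]
    (hmul : ∀ N : Submodule R M, ∃ I : Ideal R, N = I • (⊤ : Submodule R M))
    (hp : ((⊥ : Submodule R M).colon ⊤).IsPrime)
    (hns : ¬ IsSimpleModule R M)
    (hJ : sInf {P : Submodule R M | IsCoatom P} = ⊥) :
    letI B : Set (Set M) := {S | ∃ (x : M) (N : Submodule R M),
      N ≠ ⊥ ∧ N ⊔ Submodule.span R {x} = ⊤ ∧ S = x +ᵥ (N : Set M)}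
    letI t : TopologicalSpace M := TopologicalSpace.generateFrom B
    (∀ m n : M, m ≠ 0 → n ≠ 0 → m ≠ n →
      ∃ P : Submodule R M, IsCoatom P ∧ m ∉ P ∧ n ∉ P ∧ m - n ∉ P ∧
        (m +ᵥ (P : Set M)) ∩ (n +ᵥ (P : Set M)) = ∅) ∧
    @T2Space {x : M // x ≠ 0} (t.induced Subtype.val) := by
  have sep : ∀ m n : M, m ≠ 0 → n ≠ 0 → m ≠ n →
      ∃ P : Submodule R M, IsCoatom P ∧ m ∉ P ∧ n ∉ P ∧ m - n ∉ P ∧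
        (m +ᵥ (P : Set M)) ∩ (n +ᵥ (P : Set M)) = ∅ := by
    intro m n hm hn hmn
    obtain ⟨P, hP, hmP, hnP, hdP⟩ := aux_key hmul hp hJ hm hn (sub_ne_zero.2 hmn)
    refine ⟨P, hP, hmP, hnP, hdP, ?_⟩
    ext a
    simp only [Set.mem_inter_iff, Set.mem_empty_iff_false, iff_false, not_and]
    rintro ⟨p1, hp1, rfl⟩ ⟨p2, hp2, hEq⟩
    apply hdP
    have : m - n = p2 - p1 := by
      have := hEq
      simp only [vadd_eq_add] at this
      linear_combination (norm := abel) this.symm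
    rw [this]
    exact sub_mem hp2 hp1
  refine ⟨sep, ?_⟩
  -- Hausdorff
  letI t : TopologicalSpace M := TopologicalSpace.generateFrom
    {S | ∃ (x : M) (N : Submodule R M),
      N ≠ ⊥ ∧ N ⊔ Submodule.span R {x} = ⊤ ∧ S = x +ᵥ (N : Set M)}
  letI t' : TopologicalSpace {x : M // x ≠ 0} := t.induced Subtype.val
  refine ⟨?_⟩
  rintro ⟨m, hm⟩ ⟨n, hn⟩ hne
  have hmn : m ≠ n := by simpa [Subtype.ext_iff] using hne
  obtain ⟨P, hP, hmP, hnP, hdP, hdisj⟩ := sep m n hm hn hmn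
  have hPbot : P ≠ ⊥ := by
    intro h
    exact hns ((isSimpleModule_iff R M).2 ((isSimpleOrder_iff_isCoatom_bot (α := Submodule R M)).2 (h ▸ hP)))
  have hopen : ∀ x : M, x ∉ P → TopologicalSpace.GenerateOpen
      {S | ∃ (x : M) (N : Submodule R M),
        N ≠ ⊥ ∧ N ⊔ Submodule.span R {x} = ⊤ ∧ S = x +ᵥ (N : Set M)} (x +ᵥ (P : Set M)) := by
    intro x hx
    apply TopologicalSpace.GenerateOpen.basic
    show _ ∈ _
    refine ⟨x, P, hPbot, ?_, rfl⟩
    refine hP.2 _ (lt_of_le_of_ne le_sup_left ?_)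
    intro h
    exact hx (h ▸ Submodule.mem_sup_right (Submodule.mem_span_singleton_self x))
  have hmem : ∀ x : M, x ∈ x +ᵥ (P : Set M) := fun x => ⟨0, P.zero_mem, by simp⟩
  refine ⟨Subtype.val ⁻¹' (m +ᵥ (P : Set M)), Subtype.val ⁻¹' (n +ᵥ (P : Set M)),
    ⟨_, hopen m hmP, rfl⟩, ⟨_, hopen n hnP, rfl⟩, hmem m, hmem n, ?_⟩
  rw [Set.disjoint_iff_inter_eq_empty, ← Set.preimage_inter, hdisj, Set.preimage_empty]
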